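/- For a sequence s = (s_1, s_2, ...) of positive integers, the s-lecture hall cone C_n^{(s)} is Gorenstein if and only if there exists c \in \mathbb{Z}^n satisfying c_1 = 1 and c_j s_{j-1} = c_{j-1} s_j + \gcd(s_j, s_{j-1}) for all 1 < j \le n. -/

import Mathlib

noncomputable section

open scoped Classical

/-- The set of integer lattice points in `ℝ^n`. -/
def intLattice (n : ℕ) : Set (Fin n → ℝ) :=
  Set.range (fun (m : Fin n → ℤ) => fun i => (m i : ℝ))

/-- `c` is a Gorenstein point of `C`: an integer point in the interior of `C`
with `C° ∩ ℤ^n = c + (C ∩ ℤ^n)`. -/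
def IsGorensteinPoint {n : ℕ} (C : Set (Fin n → ℝ)) (c : Fin n → ℝ) : Prop :=
  c ∈ interior C ∧ c ∈ intLattice n ∧
    interior C ∩ intLattice n = (fun x => c + x) '' (C ∩ intLattice n)

/-- A cone is Gorenstein if it has a Gorenstein point. -/
def IsGorensteinCone {n : ℕ} (C : Set (Fin n → ℝ)) : Prop :=
  ∃ c, IsGorensteinPoint C c

/-- The `s`-lecture hall cone `{λ : 0 ≤ λ₁/s₁ ≤ λ₂/s₂ ≤ ⋯ ≤ λₙ/sₙ}`,
where coordinate `i : Fin n` corresponds to the mathematical index `i+1`. -/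
def lhCone (n : ℕ) (s : ℕ → ℤ) : Set (Fin n → ℝ) :=
  {x | (∀ i : Fin n, (i : ℕ) = 0 → 0 ≤ x i / (s 1 : ℝ)) ∧
       (∀ i j : Fin n, (j : ℕ) = (i : ℕ) + 1 →
          x i / (s ((i : ℕ) + 1) : ℝ) ≤ x j / (s ((j : ℕ) + 1) : ℝ))}

/-- The `s`-lecture hall partitions of length `n`: integer points of the cone. -/
def lhPartitions (n : ℕ) (s : ℕ → ℤ) : Set (Fin n → ℤ) :=
  {lam | (fun i => (lam i : ℝ)) ∈ lhCone n s}

/-- The generating function `f_n^{(s)}(q) = ∑_{λ ∈ L_n^{(s)}} q^{|λ|}` as a power series. -/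
def lhGenFun (n : ℕ) (s : ℕ → ℤ) : PowerSeries ℚ :=
  PowerSeries.mk fun m =>
    (Set.ncard {lam : Fin n → ℤ | lam ∈ lhPartitions n s ∧ ∑ i, lam i = (m : ℤ)} : ℚ)

/-- A rational function `r(q)` is self-reciprocal if `r(1/q) = ± q^k r(q)`
for some nonnegative integer `k`. -/
def SelfReciprocalRat (r : RatFunc ℚ) : Prop :=
  ∃ k : ℕ, RatFunc.eval (algebraMap ℚ (RatFunc ℚ)) (RatFunc.X)⁻¹ r = RatFunc.X ^ k * r ∨
           RatFunc.eval (algebraMap ℚ (RatFunc ℚ)) (RatFunc.X)⁻¹ r = -(RatFunc.X ^ k * r)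

/-- A power series is self-reciprocal as a rational function: it is the power series
expansion of a rational function `H/D` (with `D(0) ≠ 0`) which is self-reciprocal. -/
def GenFunSelfReciprocal (f : PowerSeries ℚ) : Prop :=
  ∃ H D : Polynomial ℚ, D.coeff 0 ≠ 0 ∧
    (↑H : PowerSeries ℚ) = f * (↑D : PowerSeries ℚ) ∧
    SelfReciprocalRat (algebraMap (Polynomial ℚ) (RatFunc ℚ) H /
      algebraMap (Polynomial ℚ) (RatFunc ℚ) D)


section lhAux
variable {n : ℕ} {s : ℕ → ℤ}

lemma spos (hs : ∀ i, 1 ≤ i → 0 < s i) (k : ℕ) : (0:ℝ) < (s (k+1) : ℝ) := by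
  exact_mod_cast hs (k+1) (Nat.le_add_left 1 k)

lemma mem_lhCone (hs : ∀ i, 1 ≤ i → 0 < s i) (x : Fin n → ℝ) :
    x ∈ lhCone n s ↔ (∀ i : Fin n, (i : ℕ) = 0 → 0 ≤ x i) ∧
      (∀ i j : Fin n, (j : ℕ) = (i : ℕ) + 1 →
        (s ((j:ℕ)+1) : ℝ) * x i ≤ (s ((i:ℕ)+1) : ℝ) * x j) := by
  have hp : (0:ℝ) < (s 1 : ℝ) := by exact_mod_cast hs 1 le_rfl
  unfold lhCone
  simp only [Set.mem_setOf_eq]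
  constructor
  · rintro ⟨h1, h2⟩
    refine ⟨fun i hi => ?_, fun i j hj => ?_⟩
    · have h := mul_nonneg (h1 i hi) hp.le
      rwa [div_mul_cancel₀ _ hp.ne'] at h
    · have := h2 i j hj
      rw [div_le_div_iff₀ (spos hs i) (spos hs j)] at this
      linarith
  · rintro ⟨h1, h2⟩
    refine ⟨fun i hi => ?_, fun i j hj => ?_⟩
    · exact div_nonneg (h1 i hi) hp.le
    · rw [div_le_div_iff₀ (spos hs i) (spos hs j)]
      have := h2 i j hj; linarith

def strictSet (n : ℕ) (s : ℕ → ℤ) : Set (Fin n → ℝ) :=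
  {x | (∀ i : Fin n, (i : ℕ) = 0 → 0 < x i) ∧
      (∀ i j : Fin n, (j : ℕ) = (i : ℕ) + 1 →
        (s ((j:ℕ)+1) : ℝ) * x i < (s ((i:ℕ)+1) : ℝ) * x j)}

lemma isOpen_strictSet : IsOpen (strictSet n s) := by
  have : strictSet n s =
      (⋂ i : Fin n, {x : Fin n → ℝ | (i : ℕ) = 0 → 0 < x i}) ∩
      (⋂ i : Fin n, ⋂ j : Fin n, {x : Fin n → ℝ | (j : ℕ) = (i : ℕ) + 1 →
        (s ((j:ℕ)+1) : ℝ) * x i < (s ((i:ℕ)+1) : ℝ) * x j}) := by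
    ext x; simp [strictSet, Set.mem_iInter]
  rw [this]
  refine IsOpen.inter (isOpen_iInter_of_finite fun i => ?_)
    (isOpen_iInter_of_finite fun i => isOpen_iInter_of_finite fun j => ?_)
  · by_cases h : (i : ℕ) = 0
    · simpa [h] using isOpen_lt continuous_const (continuous_apply i)
    · simp [h]
  · by_cases h : (j : ℕ) = (i : ℕ) + 1
    · simpa [h] using isOpen_lt (continuous_const.mul (continuous_apply i))
        (continuous_const.mul (continuous_apply j))
    · simp [h]

lemma interior_lhCone (hs : ∀ i, 1 ≤ i → 0 < s i) :
    interior (lhCone n s) = strictSet n s := by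
  apply Set.Subset.antisymm
  · -- interior ⊆ strict
    intro x hx
    have hxC : x ∈ lhCone n s := interior_subset hx
    rw [mem_lhCone hs] at hxC
    obtain ⟨h1, h2⟩ := hxC
    rw [mem_interior_iff_mem_nhds, Metric.mem_nhds_iff] at hx
    obtain ⟨ε, hε, hball⟩ := hx
    constructor
    · intro i hi
      rcases lt_or_eq_of_le (h1 i hi) with h | h
      · exact h
      · exfalso
        set y := Function.update x i (x i - ε/2) with hy
        have hyb : y ∈ Metric.ball x ε := by
          rw [Metric.mem_ball, dist_pi_lt_iff hε]
          intro k
          by_cases hk : k = i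
          · subst hk; simp [hy, Real.dist_eq, abs_of_nonpos]; linarith [abs_of_pos hε]
          · simp [hy, Function.update_of_ne hk, hε]
        have hyC := hball hyb
        rw [mem_lhCone hs] at hyC
        have := hyC.1 i hi
        rw [hy, Function.update_self] at this
        linarith
    · intro i j hj
      have hne : i ≠ j := by
        intro h; rw [h] at hj; omega
      by_contra hlt
      push_neg at hlt
      have heq : (s ((j:ℕ)+1) : ℝ) * x i = (s ((i:ℕ)+1) : ℝ) * x j :=
        le_antisymm (h2 i j hj) hlt
      set y := Function.update x j (x j - ε/2) with hy
      have hyb : y ∈ Metric.ball x ε := by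
        rw [Metric.mem_ball, dist_pi_lt_iff hε]
        intro k
        by_cases hk : k = j
        · subst hk; simp [hy, Real.dist_eq, abs_of_nonpos]; linarith [abs_of_pos hε]
        · simp [hy, Function.update_of_ne hk, hε]
      have hyC := hball hyb
      rw [mem_lhCone hs] at hyC
      have h3 := hyC.2 i j hj
      rw [hy, Function.update_self, Function.update_of_ne hne] at h3
      have hpi : (0:ℝ) < (s ((i:ℕ)+1) : ℝ) := spos hs _
      nlinarith
  · -- strict ⊆ interior
    apply interior_maximal _ isOpen_strictSet
    intro x hx
    rw [mem_lhCone hs]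
    exact ⟨fun i hi => (hx.1 i hi).le, fun i j hj => (hx.2 i j hj).le⟩

lemma int_gap {p q a b : ℤ} (hp : 0 < p) (hq : 0 < q) :
    q * a < p * b ↔ q * a + (Int.gcd q p : ℤ) ≤ p * b := by
  constructor
  · intro h
    have hd : (Int.gcd q p : ℤ) ∣ (p * b - q * a) :=
      dvd_sub (Dvd.dvd.mul_right (Int.gcd_dvd_right q p) b)
        (Dvd.dvd.mul_right (Int.gcd_dvd_left q p) a)
    have := Int.le_of_dvd (by linarith) hd
    linarith
  · intro h
    have hg : (0:ℤ) < (Int.gcd q p : ℤ) := by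
      have h' : Int.gcd q p ≠ 0 := by
        simp only [ne_eq, Int.gcd_eq_zero_iff, not_and]
        intro h'; omega
      exact_mod_cast Nat.pos_of_ne_zero h'
    linarith

-- integer versions
lemma int_mem_lhCone (hs : ∀ i, 1 ≤ i → 0 < s i) (m : Fin n → ℤ) :
    (fun i => (m i : ℝ)) ∈ lhCone n s ↔
      (∀ i : Fin n, (i : ℕ) = 0 → 0 ≤ m i) ∧
      (∀ i j : Fin n, (j : ℕ) = (i : ℕ) + 1 →
        s ((j:ℕ)+1) * m i ≤ s ((i:ℕ)+1) * m j) := by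
  rw [mem_lhCone hs]
  constructor
  · rintro ⟨h1, h2⟩
    exact ⟨fun i hi => by exact_mod_cast h1 i hi,
           fun i j hj => by exact_mod_cast h2 i j hj⟩
  · rintro ⟨h1, h2⟩
    exact ⟨fun i hi => by exact_mod_cast h1 i hi,
           fun i j hj => by exact_mod_cast h2 i j hj⟩

lemma int_mem_strictSet (m : Fin n → ℤ) :
    (fun i => (m i : ℝ)) ∈ strictSet n s ↔
      (∀ i : Fin n, (i : ℕ) = 0 → 0 < m i) ∧
      (∀ i j : Fin n, (j : ℕ) = (i : ℕ) + 1 →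
        s ((j:ℕ)+1) * m i < s ((i:ℕ)+1) * m j) := by
  unfold strictSet
  simp only [Set.mem_setOf_eq]
  constructor
  · rintro ⟨h1, h2⟩
    exact ⟨fun i hi => by exact_mod_cast h1 i hi,
           fun i j hj => by exact_mod_cast h2 i j hj⟩
  · rintro ⟨h1, h2⟩
    exact ⟨fun i hi => by exact_mod_cast h1 i hi,
           fun i j hj => by exact_mod_cast h2 i j hj⟩

/-- Reverse direction. -/
lemma reverse_dir (hs : ∀ i, 1 ≤ i → 0 < s i) (c : ℕ → ℤ) (hc1 : c 1 = 1)
    (hrec : ∀ j, 1 < j → j ≤ n →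
      c j * s (j - 1) = c (j - 1) * s j + (Int.gcd (s j) (s (j - 1)) : ℤ)) :
    IsGorensteinCone (lhCone n s) := by
  set C : Fin n → ℤ := fun i => c ((i : ℕ) + 1) with hC
  -- facet equation in useful form
  have key : ∀ i j : Fin n, (j : ℕ) = (i : ℕ) + 1 →
      s ((i:ℕ)+1) * C j = s ((j:ℕ)+1) * C i + (Int.gcd (s ((j:ℕ)+1)) (s ((i:ℕ)+1)) : ℤ) := by
    intro i j hj
    have h := hrec ((j:ℕ)+1) (by omega) (by omega)
    have e1 : (j:ℕ) + 1 - 1 = (i:ℕ) + 1 := by omega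
    rw [e1] at h
    simp only [hC]
    linarith
  have gpos : ∀ i j : Fin n, (j : ℕ) = (i : ℕ) + 1 →
      (0:ℤ) < (Int.gcd (s ((j:ℕ)+1)) (s ((i:ℕ)+1)) : ℤ) := by
    intro i j hj
    have h1 := hs ((j:ℕ)+1) (by omega)
    have : Int.gcd (s ((j:ℕ)+1)) (s ((i:ℕ)+1)) ≠ 0 := by
      simp only [ne_eq, Int.gcd_eq_zero_iff, not_and]
      intro h'; omega
    exact_mod_cast Nat.pos_of_ne_zero this
  have hC0 : ∀ i : Fin n, (i : ℕ) = 0 → C i = 1 := by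
    intro i hi; simp only [hC, hi]; exact hc1
  refine ⟨fun i => (C i : ℝ), ?_, ⟨C, rfl⟩, ?_⟩
  · rw [interior_lhCone hs, int_mem_strictSet]
    refine ⟨fun i hi => by rw [hC0 i hi]; norm_num, fun i j hj => ?_⟩
    have := key i j hj
    have := gpos i j hj
    omega
  · ext x
    simp only [Set.mem_inter_iff, Set.mem_image]
    constructor
    · rintro ⟨hxI, m, rfl⟩
      rw [interior_lhCone hs, int_mem_strictSet] at hxI
      obtain ⟨h1, h2⟩ := hxI
      refine ⟨fun i => ((m i - C i : ℤ) : ℝ), ⟨?_, ⟨fun i => m i - C i, rfl⟩⟩, ?_⟩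
      · rw [int_mem_lhCone hs]
        constructor
        · intro i hi
          have := h1 i hi
          have := hC0 i hi
          omega
        · intro i j hj
          have h3 := h2 i j hj
          have h4 := key i j hj
          have hp := hs ((i:ℕ)+1) (by omega)
          have hq := hs ((j:ℕ)+1) (by omega)
          have h5 := (int_gap hp hq).mp h3
          -- goal: s(j+1)*(m i - C i) ≤ s(i+1)*(m j - C j)
          nlinarith [h5, h4]
      · funext i
        simp only [Pi.add_apply]
        push_cast
        ring
    · rintro ⟨y, ⟨hyC, m, rfl⟩, rfl⟩
      rw [int_mem_lhCone hs] at hyC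
      obtain ⟨h1, h2⟩ := hyC
      have hx : (fun i => (C i : ℝ)) + (fun i => ((m i : ℤ) : ℝ)) =
          fun i => ((C i + m i : ℤ) : ℝ) := by
        funext i; push_cast; rfl
      rw [hx]
      refine ⟨?_, ⟨fun i => C i + m i, rfl⟩⟩
      rw [interior_lhCone hs, int_mem_strictSet]
      constructor
      · intro i hi
        have := h1 i hi; have := hC0 i hi; omega
      · intro i j hj
        have h3 := h2 i j hj
        have h4 := key i j hj
        have h5 := gpos i j hj
        have hp := hs ((i:ℕ)+1) (by omega)
        have hq := hs ((j:ℕ)+1) (by omega)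
        nlinarith [h3, h4, h5]

def chain (s : ℕ → ℤ) (m : ℕ) (v : ℤ) : ℕ → ℤ
  | 0 => v
  | k+1 => s (m + k + 2) * chain s m v k + 1

lemma chain_ge_one (hs : ∀ i, 1 ≤ i → 0 < s i) (m : ℕ) {v : ℤ} (hv : 1 ≤ v) :
    ∀ k, 1 ≤ chain s m v k := by
  intro k
  induction k with
  | zero => exact hv
  | succ k ih =>
    have := hs (m+k+2) (by omega)
    show 1 ≤ s (m + k + 2) * chain s m v k + 1
    nlinarith

lemma step_ineq (hs : ∀ i, 1 ≤ i → 0 < s i) (k : ℕ) {u : ℤ} (hu : 1 ≤ u) :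
    s (k+2) * u < s (k+1) * (s (k+2) * u + 1) := by
  have h1 := hs (k+1) (by omega)
  have h2 := hs (k+2) (by omega)
  have hA : 1 ≤ s (k+2) * u := by nlinarith
  nlinarith [mul_nonneg (by linarith : (0:ℤ) ≤ s (k+1) - 1) (by linarith : (0:ℤ) ≤ s (k+2) * u + 1)]

lemma chain_step (hs : ∀ i, 1 ≤ i → 0 < s i) (m : ℕ) {v : ℤ} (hv : 1 ≤ v) (k : ℕ) :
    s (m+k+2) * chain s m v k < s (m+k+1) * chain s m v (k+1) := by
  have := step_ineq hs (m+k) (chain_ge_one hs m hv k)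
  show s (m+k+2) * chain s m v k < s (m+k+1) * (s (m + k + 2) * chain s m v k + 1)
  exact this

lemma int_gcd_pos {x y : ℤ} (hx : 0 < x) : 0 < (Int.gcd x y : ℤ) := by
  have : Int.gcd x y ≠ 0 := by
    simp only [ne_eq, Int.gcd_eq_zero_iff, not_and]
    intro h; omega
  exact_mod_cast Nat.pos_of_ne_zero this

lemma exists_bezout (hs : ∀ i, 1 ≤ i → 0 < s i) (a : ℕ) (M : ℤ) :
    ∃ zi zj : ℤ, M ≤ zi ∧
      s (a+1) * zj = s (a+2) * zi + (Int.gcd (s (a+2)) (s (a+1)) : ℤ) := by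
  set p := s (a+1) with hp
  set q := s (a+2) with hq
  have hp0 : 0 < p := hs (a+1) (by omega)
  have hq0 : 0 < q := hs (a+2) (by omega)
  set g : ℤ := (Int.gcd q p : ℤ) with hg
  have hg0 : 0 < g := by rw [hg]; exact int_gcd_pos hq0
  obtain ⟨p', hp'⟩ : g ∣ p := Int.gcd_dvd_right q p
  obtain ⟨q', hq'⟩ : g ∣ q := Int.gcd_dvd_left q p
  have hbez : g = q * Int.gcdA q p + p * Int.gcdB q p := Int.gcd_eq_gcd_ab q p
  set A := Int.gcdA q p
  set B := Int.gcdB q p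
  have hp'1 : 1 ≤ p' := by nlinarith
  set t : ℤ := max 0 (M + A) with ht
  refine ⟨-A + t * p', B + t * q', ?_, ?_⟩
  · have h1 : 0 ≤ t := le_max_left _ _
    have h2 : M + A ≤ t := le_max_right _ _
    nlinarith
  · have : p * q' = q * p' := by rw [hp', hq']; ring
    calc p * (B + t * q') = p * B + t * (p * q') := by ring
    _ = p * B + t * (q * p') := by rw [this]
    _ = q * (-A + t * p') + (q * A + p * B) := by ring
    _ = q * (-A + t * p') + g := by rw [← hbez]

lemma exists_pair_witness (hs : ∀ i, 1 ≤ i → 0 < s i) {n : ℕ} (i0 j0 : Fin n)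
    (hj0 : (j0 : ℕ) = (i0 : ℕ) + 1) :
    ∃ z : Fin n → ℤ,
      (∀ i : Fin n, (i : ℕ) = 0 → 0 < z i) ∧
      (∀ i j : Fin n, (j : ℕ) = (i : ℕ) + 1 →
        s ((j:ℕ)+1) * z i < s ((i:ℕ)+1) * z j) ∧
      s ((i0:ℕ)+1) * z j0 =
        s ((j0:ℕ)+1) * z i0 + (Int.gcd (s ((j0:ℕ)+1)) (s ((i0:ℕ)+1)) : ℤ) := by
  set a := (i0 : ℕ) with ha
  set M : ℤ := s (a+1) * chain s 0 1 (a-1) + 1 with hM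
  obtain ⟨zi, zj, hziM, hbez⟩ := exists_bezout hs a M
  have hch1 : 1 ≤ chain s 0 1 (a-1) := chain_ge_one hs 0 le_rfl _
  have hsa1 := hs (a+1) (by omega)
  have hsa2 := hs (a+2) (by omega)
  have hzi1 : 1 ≤ zi := by nlinarith
  have hg0 : 0 < (Int.gcd (s (a+2)) (s (a+1)) : ℤ) := int_gcd_pos hsa2
  have hzj1 : 1 ≤ zj := by nlinarith
  set z : Fin n → ℤ := fun k =>
    if (k : ℕ) < a then chain s 0 1 (k : ℕ)
    else if (k : ℕ) = a then zi
    else chain s (a+1) zj ((k : ℕ) - (a+1)) with hz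
  have hz_lt : ∀ k : Fin n, (k : ℕ) < a → z k = chain s 0 1 (k : ℕ) := by
    intro k hk; simp [hz, hk]
  have hz_eq : ∀ k : Fin n, (k : ℕ) = a → z k = zi := by
    intro k hk; simp [hz, hk]
  have hz_gt : ∀ k : Fin n, a < (k : ℕ) → z k = chain s (a+1) zj ((k : ℕ) - (a+1)) := by
    intro k hk
    simp only [hz]
    rw [if_neg (by omega), if_neg (by omega)]
  refine ⟨z, ?_, ?_, ?_⟩
  · intro i hi
    rcases Nat.eq_zero_or_pos a with h0 | h0
    · rw [hz_eq i (by omega)]; omega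
    · rw [hz_lt i (by omega), hi]
      show (0:ℤ) < 1
      norm_num
  · intro i j hjj
    rcases (by omega : (i:ℕ)+1 < a ∨ (i:ℕ)+1 = a ∨ (i:ℕ) = a ∨ a < (i:ℕ)) with h | h | h | h
    · rw [hz_lt i (by omega), hz_lt j (by omega), hjj]
      have := chain_step hs 0 (le_refl (1:ℤ)) (i:ℕ)
      rw [show 0+(i:ℕ)+2 = (i:ℕ)+1+1 from by omega,
        show 0+(i:ℕ)+1 = (i:ℕ)+1 from by omega] at this
      exact this
    · rw [hz_lt i (by omega), hz_eq j (by omega), hjj,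
        show (i:ℕ) = a - 1 from by omega, show a-1+1 = a from by omega]
      have h1 : (1:ℤ) ≤ s a := hs a (by omega)
      nlinarith
    · rw [hz_eq i h, hz_gt j (by omega), hjj, h, Nat.sub_self]
      show s (a+2) * zi < s (a+1) * zj
      rw [hbez]
      linarith
    · rw [hz_gt i (by omega), hz_gt j (by omega), hjj]
      have := chain_step hs (a+1) hzj1 ((i:ℕ) - (a+1))
      rw [show a+1+((i:ℕ)-(a+1))+2 = (i:ℕ)+1+1 from by omega,
        show a+1+((i:ℕ)-(a+1))+1 = (i:ℕ)+1 from by omega,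
        show (i:ℕ)-(a+1)+1 = (i:ℕ)+1-(a+1) from by omega] at this
      exact this
  · rw [hz_eq i0 rfl, hz_gt j0 (by omega), hj0, Nat.sub_self]
    show s (a+1) * zj = s (a+2) * zi + (Int.gcd (s (a+2)) (s (a+1)) : ℤ)
    exact hbez
/-- Forward direction. -/
lemma forward_dir (hs : ∀ i, 1 ≤ i → 0 < s i) (hn : 0 < n)
    (hG : IsGorensteinCone (lhCone n s)) :
    ∃ c : ℕ → ℤ, c 1 = 1 ∧ ∀ j, 1 < j → j ≤ n →
      c j * s (j - 1) = c (j - 1) * s j + (Int.gcd (s j) (s (j - 1)) : ℤ) := by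
  obtain ⟨cR, hcI, ⟨C, rfl⟩, hset⟩ := hG
  -- decomposition of interior lattice points
  have hdec : ∀ m : Fin n → ℤ, (fun i => (m i : ℝ)) ∈ strictSet n s →
      ∃ w : Fin n → ℤ, (fun i => (w i : ℝ)) ∈ lhCone n s ∧ ∀ i, m i = C i + w i := by
    intro m hm
    have hmem : (fun i => (m i : ℝ)) ∈ interior (lhCone n s) ∩ intLattice n := by
      rw [interior_lhCone hs]
      exact ⟨hm, ⟨m, rfl⟩⟩
    rw [hset] at hmem
    obtain ⟨y, ⟨hyC, w, rfl⟩, heq⟩ := hmem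
    refine ⟨w, hyC, fun i => ?_⟩
    have h := congrFun heq i
    simp only [Pi.add_apply] at h
    exact_mod_cast h.symm
  rw [interior_lhCone hs, int_mem_strictSet] at hcI
  obtain ⟨hC1, hC2⟩ := hcI
  -- C is 1 at index 0
  have hC0 : ∀ i : Fin n, (i : ℕ) = 0 → C i = 1 := by
    intro i hi
    have hz0 : (fun i : Fin n => ((chain s 0 1 (i : ℕ) : ℤ) : ℝ)) ∈ strictSet n s := by
      rw [int_mem_strictSet]
      constructor
      · intro i hi
        rw [hi]
        exact zero_lt_one
      · intro i j hj
        rw [hj]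
        have := chain_step hs 0 (le_refl (1:ℤ)) (i:ℕ)
        rw [show 0+(i:ℕ)+2 = (i:ℕ)+1+1 from by omega,
          show 0+(i:ℕ)+1 = (i:ℕ)+1 from by omega] at this
        exact this
    obtain ⟨w, hw, hmw⟩ := hdec _ hz0
    rw [int_mem_lhCone hs] at hw
    have h1 := hC1 i hi
    have h2 := hw.1 i hi
    have h3 := hmw i
    rw [hi] at h3
    have : chain s 0 1 0 = 1 := rfl
    omega
  -- facet equations
  have hpair : ∀ i0 j0 : Fin n, (j0 : ℕ) = (i0 : ℕ) + 1 →
      s ((i0:ℕ)+1) * C j0 =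
        s ((j0:ℕ)+1) * C i0 + (Int.gcd (s ((j0:ℕ)+1)) (s ((i0:ℕ)+1)) : ℤ) := by
    intro i0 j0 hj
    obtain ⟨z, hz1, hz2, hzval⟩ := exists_pair_witness hs i0 j0 hj
    obtain ⟨w, hw, hmw⟩ := hdec z (by rw [int_mem_strictSet]; exact ⟨hz1, hz2⟩)
    rw [int_mem_lhCone hs] at hw
    have hCgap := (int_gap (hs ((i0:ℕ)+1) (by omega)) (hs ((j0:ℕ)+1) (by omega))).mp
      (hC2 i0 j0 hj)
    have hwle := hw.2 i0 j0 hj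
    have key : s ((i0:ℕ)+1) * (C j0 + w j0) =
        s ((j0:ℕ)+1) * (C i0 + w i0) + (Int.gcd (s ((j0:ℕ)+1)) (s ((i0:ℕ)+1)) : ℤ) := by
      rw [← hmw j0, ← hmw i0]
      exact hzval
    nlinarith [key, hCgap, hwle]
  -- build the sequence
  refine ⟨fun k => if h : 1 ≤ k ∧ k ≤ n then C ⟨k-1, by omega⟩ else 1, ?_, ?_⟩
  · beta_reduce
    rw [dif_pos ⟨le_rfl, hn⟩]
    exact hC0 ⟨0, hn⟩ rfl
  · intro J hJ1 hJn
    beta_reduce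
    rw [dif_pos ⟨by omega, hJn⟩, dif_pos ⟨by omega, by omega⟩]
    have hj : ((⟨J-1, by omega⟩ : Fin n) : ℕ) = ((⟨J-2, by omega⟩ : Fin n) : ℕ) + 1 := by
      show J - 1 = J - 2 + 1
      omega
    have hfact := hpair ⟨J-2, by omega⟩ ⟨J-1, by omega⟩ hj
    rw [show ((⟨J-2, by omega⟩ : Fin n) : ℕ) = J - 2 from rfl,
      show ((⟨J-1, by omega⟩ : Fin n) : ℕ) = J - 1 from rfl,
      show J-2+1 = J-1 from by omega, show J-1+1 = J from by omega] at hfact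
    have e4 : (⟨J - 1 - 1, by omega⟩ : Fin n) = (⟨J - 2, by omega⟩ : Fin n) :=
      Fin.ext (show J - 1 - 1 = J - 2 by omega)
    rw [e4]
    linarith [hfact]


lemma gorenstein_n0 (s : ℕ → ℤ) : IsGorensteinCone (lhCone 0 s) := by
  have huniv : lhCone 0 s = Set.univ :=
    Set.eq_univ_of_forall (fun x => ⟨fun i => i.elim0, fun i => i.elim0⟩)
  have hlat : intLattice 0 = Set.univ :=
    Set.eq_univ_of_forall (fun x => ⟨fun _ => 0, Subsingleton.elim _ x⟩)
  refine ⟨0, ?_, ?_, ?_⟩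
  · rw [huniv, interior_univ]; trivial
  · rw [hlat]; trivial
  · rw [huniv, hlat, interior_univ]
    have hid : (fun x : Fin 0 → ℝ => 0 + x) = id := funext fun x => zero_add x
    rw [hid, Set.image_id]

end lhAux

/-- For a sequence `s` of positive integers, `C_n^{(s)}` is Gorenstein
iff there exists an integer point `c` with `c₁ = 1` and
`cⱼ s_{j-1} = c_{j-1} sⱼ + gcd(sⱼ, s_{j-1})` for all `1 < j ≤ n`. -/
theorem stmt5 (n : ℕ) (s : ℕ → ℤ) (hs : ∀ i, 1 ≤ i → 0 < s i) :
    IsGorensteinCone (lhCone n s) ↔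
      ∃ c : ℕ → ℤ, c 1 = 1 ∧ ∀ j, 1 < j → j ≤ n →
        c j * s (j - 1) = c (j - 1) * s j + (Int.gcd (s j) (s (j - 1)) : ℤ) := by
  rcases Nat.eq_zero_or_pos n with hn | hn
  · subst hn
    constructor
    · intro _
      exact ⟨fun _ => 1, rfl, fun j hj1 hj2 => absurd (hj1.trans_le hj2) (by norm_num)⟩
    · intro _
      exact gorenstein_n0 s
  · constructor
    · exact forward_dir hs hn
    · rintro ⟨c, hc1, hrec⟩
      exact reverse_dir hs c hc1 hrec
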